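/- Let μ0 be a mean-zero Gaussian measure on a separable Banach space with μ0(X) = 1 for a Banach space X, and define probability measures μ and μ^N by dμ/dμ0(u) = Z^{-1} exp(−Φ(u)) and dμ^N/dμ0(u) = (Z^N)^{-1} exp(−Φ^N(u)), with Z, Z^N the corresponding normalization constants. Assume Φ and Φ^N satisfy, with constants uniform in N: (i) for every ε > 0 there is M ∈ R such that Φ(u) ≥ M − ε‖u‖_X² for all u ∈ X (same for Φ^N); (ii) for every r > 0 there is L(r) > 0 such that Φ(u) ≤ L(r) for ‖u‖_X < r (same for Φ^N). Assume also that for any R > 0 there is K = K(R) > 0 such that |Φ(u) − Φ^N(u)| ≤ K ψ(N) for all u with ‖u‖_X ≤ R, where ψ(N) → 0 as N → ∞. Then d_Hell(μ, μ^N) → 0 as N → ∞. -/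

import Mathlib

/-!
STATEMENT 5 (Theorem 2.5 of the paper, `t:wp2f`).

Under Assumptions 2.1(i),(ii), uniform in `N`, and the weaker forward
approximation estimate `|Φ(u) − Φ^N(u)| ≤ K(R) ψ(N)` on balls `{‖u‖_X ≤ R}`,
the Hellinger distance between `μ` and `μ^N` tends to `0` as `N → ∞`.
-/

open MeasureTheory Real Filter Topology

/-- The Hellinger distance between the measures with densities `p` and `q` with
respect to the reference measure `ν`. -/
noncomputable def hellinger {X : Type*} [MeasurableSpace X] (ν : Measure X)
    (p q : X → ℝ) : ℝ :=
  Real.sqrt ((1 / 2) * ∫ u, (Real.sqrt (p u) - Real.sqrt (q u)) ^ 2 ∂ν)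

theorem stmt5
    {X : Type*} [NormedAddCommGroup X] [NormedSpace ℝ X] [CompleteSpace X]
    [MeasurableSpace X] [BorelSpace X]
    (μ0 : Measure X) [IsProbabilityMeasure μ0]
    -- μ0 is a mean-zero Gaussian measure with μ0(X) = 1:
    (hFernique : ∃ a : ℝ, 0 < a ∧ Integrable (fun u => Real.exp (a * ‖u‖ ^ 2)) μ0)
    (hball : ∀ r : ℝ, 0 < r → 0 < μ0 {u : X | ‖u‖ ≤ r})
    (Φ : X → ℝ) (ΦN : ℕ → X → ℝ)
    (hΦmeas : Measurable Φ) (hΦNmeas : ∀ N, Measurable (ΦN N))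
    -- Assumption 2.1(i), with constants uniform in N
    (hlower : ∀ ε : ℝ, 0 < ε → ∃ M : ℝ, ∀ (N : ℕ) (u : X),
      M - ε * ‖u‖ ^ 2 ≤ Φ u ∧ M - ε * ‖u‖ ^ 2 ≤ ΦN N u)
    -- Assumption 2.1(ii), with constants uniform in N
    (hupper : ∀ r : ℝ, 0 < r → ∃ L : ℝ, 0 < L ∧ ∀ (N : ℕ) (u : X),
      ‖u‖ < r → Φ u ≤ L ∧ ΦN N u ≤ L)
    (ψ : ℕ → ℝ) (hψ : Tendsto ψ atTop (𝓝 0))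
    -- forward approximation estimate, on balls only
    (happrox : ∀ R : ℝ, 0 < R → ∃ K : ℝ, 0 < K ∧ ∀ (N : ℕ) (u : X),
      ‖u‖ ≤ R → |Φ u - ΦN N u| ≤ K * ψ N) :
    Tendsto (fun N : ℕ =>
      hellinger μ0
        (fun u => (∫ u', Real.exp (-(Φ u')) ∂μ0)⁻¹ * Real.exp (-(Φ u)))
        (fun u => (∫ u', Real.exp (-(ΦN N u')) ∂μ0)⁻¹ * Real.exp (-(ΦN N u))))
      atTop (𝓝 0) := by
  classical
  obtain ⟨a, ha, hFa⟩ := hFernique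
  obtain ⟨M, hM⟩ := hlower a ha
  obtain ⟨L, hL0, hL⟩ := hupper 1 one_pos
  set g : X → ℝ := fun u => Real.exp (a * ‖u‖ ^ 2) * Real.exp (-M) with hg_def
  have hg_int : Integrable g μ0 := hFa.mul_const _
  have hg_nonneg : ∀ u, 0 ≤ g u := fun u => mul_nonneg (Real.exp_pos _).le (Real.exp_pos _).le
  -- small ball
  have hs_eq : {u : X | ‖u‖ ≤ (1/2 : ℝ)} = Metric.closedBall (0 : X) (1/2) := by
    ext u; simp [Metric.mem_closedBall, dist_zero_right]
  have hs_meas : MeasurableSet {u : X | ‖u‖ ≤ (1/2 : ℝ)} := by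
    rw [hs_eq]; exact Metric.isClosed_closedBall.measurableSet
  have hs_pos : 0 < (μ0 {u : X | ‖u‖ ≤ (1/2 : ℝ)}).toReal :=
    ENNReal.toReal_pos (ne_of_gt (hball (1/2) (by norm_num))) (measure_ne_top _ _)
  set c : ℝ := Real.exp (-L) * (μ0 {u : X | ‖u‖ ≤ (1/2 : ℝ)}).toReal with hc_def
  have hc : 0 < c := mul_pos (Real.exp_pos _) hs_pos
  -- key bounds for any potential satisfying the assumptions
  have key : ∀ h : X → ℝ, Measurable h → (∀ u, M - a * ‖u‖ ^ 2 ≤ h u) →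
      (∀ u, ‖u‖ < 1 → h u ≤ L) →
      Integrable (fun u => Real.exp (-h u)) μ0 ∧
        (∀ u, Real.exp (-h u) ≤ g u) ∧
        c ≤ ∫ u, Real.exp (-h u) ∂μ0 := by
    intro h hmeas hlow hup
    have hle : ∀ u, Real.exp (-h u) ≤ g u := by
      intro u
      rw [hg_def]
      simp only []
      rw [← Real.exp_add]
      exact Real.exp_le_exp.mpr (by linarith [hlow u])
    have hint : Integrable (fun u => Real.exp (-h u)) μ0 := by
      refine hg_int.mono' hmeas.neg.exp.aestronglyMeasurable ?_
      filter_upwards with u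
      rw [Real.norm_of_nonneg (Real.exp_pos _).le]
      exact hle u
    refine ⟨hint, hle, ?_⟩
    have h1 : c ≤ ∫ u in {u : X | ‖u‖ ≤ (1/2 : ℝ)}, Real.exp (-h u) ∂μ0 := by
      rw [hc_def, mul_comm]
      refine MeasureTheory.setIntegral_ge_of_const_le hs_meas (measure_ne_top _ _) ?_
        hint.integrableOn
      intro u hu
      have : h u ≤ L := hup u (lt_of_le_of_lt hu (by norm_num))
      exact Real.exp_le_exp.mpr (by linarith)
    refine le_trans h1 ?_
    exact MeasureTheory.setIntegral_le_integral hint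
      (Filter.Eventually.of_forall fun u => (Real.exp_pos _).le)
  obtain ⟨hΦint, hΦle, hΦc⟩ := key Φ hΦmeas (fun u => (hM 0 u).1) (fun u hu => (hL 0 u hu).1)
  have hΦN := fun N => key (ΦN N) (hΦNmeas N) (fun u => (hM N u).2) (fun u hu => (hL N u hu).2)
  -- pointwise convergence of potentials
  have hpt : ∀ u : X, Tendsto (fun N => ΦN N u) atTop (𝓝 (Φ u)) := by
    intro u
    obtain ⟨K, hK0, hK⟩ := happrox (‖u‖ + 1) (by positivity)
    have h0 : Tendsto (fun N => Φ u - ΦN N u) atTop (𝓝 0) := by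
      refine squeeze_zero_norm (fun N => ?_) (by simpa using hψ.const_mul K)
      simpa [Real.norm_eq_abs] using hK N u (by linarith)
    have h1 : Tendsto (fun N => Φ u - (Φ u - ΦN N u)) atTop (𝓝 (Φ u - 0)) :=
      Tendsto.sub tendsto_const_nhds h0
    simpa using h1
  set Z : ℝ := ∫ u', Real.exp (-(Φ u')) ∂μ0 with hZ_def
  set ZN : ℕ → ℝ := fun N => ∫ u', Real.exp (-(ΦN N u')) ∂μ0 with hZN_def
  have hZc : c ≤ Z := hΦc
  have hZNc : ∀ N, c ≤ ZN N := fun N => (hΦN N).2.2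
  have hZpos : 0 < Z := lt_of_lt_of_le hc hZc
  have hZne : Z ≠ 0 := ne_of_gt hZpos
  -- convergence of normalization constants
  have hZconv : Tendsto ZN atTop (𝓝 Z) := by
    refine MeasureTheory.tendsto_integral_of_dominated_convergence g
      (fun N => (hΦNmeas N).neg.exp.aestronglyMeasurable) hg_int (fun N => ?_) ?_
    · filter_upwards with u
      rw [Real.norm_of_nonneg (Real.exp_pos _).le]
      exact (hΦN N).2.1 u
    · filter_upwards with u
      exact (Real.continuous_exp.tendsto _).comp (hpt u).neg
  -- the Hellinger integrand
  have hTconv : Tendsto (fun N => ∫ u,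
      (Real.sqrt (Z⁻¹ * Real.exp (-(Φ u))) -
        Real.sqrt ((ZN N)⁻¹ * Real.exp (-(ΦN N u)))) ^ 2 ∂μ0)
      atTop (𝓝 (∫ u, (0 : ℝ) ∂μ0)) := by
    refine MeasureTheory.tendsto_integral_of_dominated_convergence
      (fun u => 2 * (c⁻¹ * g u)) (fun N => ?_) ((hg_int.const_mul _).const_mul 2)
      (fun N => ?_) ?_
    · exact (((hΦmeas.neg.exp.const_mul _).sqrt.sub
        ((hΦNmeas N).neg.exp.const_mul _).sqrt).pow_const 2).aestronglyMeasurable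
    · filter_upwards with u
      have hx : (0:ℝ) ≤ Z⁻¹ * Real.exp (-(Φ u)) :=
        mul_nonneg (inv_nonneg.mpr hZpos.le) (Real.exp_pos _).le
      have hy : (0:ℝ) ≤ (ZN N)⁻¹ * Real.exp (-(ΦN N u)) :=
        mul_nonneg (inv_nonneg.mpr (le_trans hc.le (hZNc N))) (Real.exp_pos _).le
      have hsq : (Real.sqrt (Z⁻¹ * Real.exp (-(Φ u))) -
          Real.sqrt ((ZN N)⁻¹ * Real.exp (-(ΦN N u)))) ^ 2 ≤
          Z⁻¹ * Real.exp (-(Φ u)) + (ZN N)⁻¹ * Real.exp (-(ΦN N u)) := by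
        nlinarith [Real.sq_sqrt hx, Real.sq_sqrt hy,
          mul_nonneg (Real.sqrt_nonneg (Z⁻¹ * Real.exp (-(Φ u))))
            (Real.sqrt_nonneg ((ZN N)⁻¹ * Real.exp (-(ΦN N u))))]
      have hb1 : Z⁻¹ * Real.exp (-(Φ u)) ≤ c⁻¹ * g u :=
        mul_le_mul (inv_anti₀ hc hZc) (hΦle u) (Real.exp_pos _).le
          (inv_nonneg.mpr hc.le)
      have hb2 : (ZN N)⁻¹ * Real.exp (-(ΦN N u)) ≤ c⁻¹ * g u :=
        mul_le_mul (inv_anti₀ hc (hZNc N)) ((hΦN N).2.1 u) (Real.exp_pos _).le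
          (inv_nonneg.mpr hc.le)
      rw [Real.norm_of_nonneg (sq_nonneg _)]
      linarith
    · filter_upwards with u
      have hB : Tendsto (fun N => (ZN N)⁻¹ * Real.exp (-(ΦN N u))) atTop
          (𝓝 (Z⁻¹ * Real.exp (-(Φ u)))) :=
        (hZconv.inv₀ hZne).mul ((Real.continuous_exp.tendsto _).comp (hpt u).neg)
      have hB' : Tendsto (fun N => Real.sqrt ((ZN N)⁻¹ * Real.exp (-(ΦN N u)))) atTop
          (𝓝 (Real.sqrt (Z⁻¹ * Real.exp (-(Φ u))))) :=
        (Real.continuous_sqrt.tendsto _).comp hB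
      have hC : Tendsto (fun N => (Real.sqrt (Z⁻¹ * Real.exp (-(Φ u))) -
          Real.sqrt ((ZN N)⁻¹ * Real.exp (-(ΦN N u)))) ^ 2) atTop
          (𝓝 ((Real.sqrt (Z⁻¹ * Real.exp (-(Φ u))) -
            Real.sqrt (Z⁻¹ * Real.exp (-(Φ u)))) ^ 2)) :=
        (Tendsto.sub tendsto_const_nhds hB').pow 2
      simpa using hC
  simp only [hellinger]
  have final : Tendsto (fun N => Real.sqrt ((1/2 : ℝ) * ∫ u,
      (Real.sqrt (Z⁻¹ * Real.exp (-(Φ u))) -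
        Real.sqrt ((ZN N)⁻¹ * Real.exp (-(ΦN N u)))) ^ 2 ∂μ0)) atTop
      (𝓝 (Real.sqrt ((1/2 : ℝ) * ∫ u, (0 : ℝ) ∂μ0))) :=
    (Real.continuous_sqrt.tendsto _).comp (Tendsto.mul tendsto_const_nhds hTconv)
  simpa using final
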